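/- Let T be a measure-preserving (not necessarily ergodic) transformation of a probability space (X, F, μ), and let (f_n)_{n≥1} be measurable functions X → ℝ ∪ {−∞} with the positive part f_1^+ integrable, satisfying f_{n+m}(x) ≤ f_n(T^m x) + f_m(x) for μ-a.e. x and all n, m ≥ 1. Define F(x) = limsup_{n→∞} f_n(x). Then the symmetric difference of the sets {x : F(x) < 0} and {x : lim_{n→∞} (1/n) f_n(x) < 0} has μ-measure zero. -/

import Mathlib

open MeasureTheory Filter Topology

namespace SubadditiveAux

variable {X : Type*} [MeasurableSpace X]

/-- Birkhoff sum. -/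
def bS (T : X → X) (g : X → ℝ) (n : ℕ) (x : X) : ℝ := ∑ k ∈ Finset.range n, g (T^[k] x)

lemma bS_succ (T : X → X) (g : X → ℝ) (n : ℕ) (x : X) :
    bS T g (n + 1) x = g x + bS T g n (T x) := by
  unfold bS
  rw [Finset.sum_range_succ']
  simp [Function.iterate_succ_apply, add_comm]

lemma bS_measurable {T : X → X} (hT : Measurable T) {g : X → ℝ} (hg : Measurable g) (n : ℕ) :
    Measurable (bS T g n) := by
  apply Finset.measurable_sum
  intro k _
  exact hg.comp (hT.iterate k)

/-- Running maximum `max (0, max_{1 ≤ n ≤ N} S_n)`. -/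
def mPhi (T : X → X) (g : X → ℝ) : ℕ → X → ℝ
  | 0 => fun _ => 0
  | (N + 1) => fun x => max (mPhi T g N x) (bS T g (N + 1) x)

lemma mPhi_nonneg (T : X → X) (g : X → ℝ) (N : ℕ) (x : X) : 0 ≤ mPhi T g N x := by
  induction N with
  | zero => simp [mPhi]
  | succ N ih => exact le_trans ih (le_max_left _ _)

lemma mPhi_mono (T : X → X) (g : X → ℝ) {N M : ℕ} (h : N ≤ M) (x : X) :
    mPhi T g N x ≤ mPhi T g M x := by
  induction M with
  | zero => simp_all
  | succ M ih =>
    rcases Nat.lt_or_ge N (M + 1) with h' | h'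
    · exact le_trans (ih (Nat.lt_succ_iff.mp h')) (le_max_left _ _)
    · have : N = M + 1 := le_antisymm h h'
      simp [this]

lemma bS_le_mPhi (T : X → X) (g : X → ℝ) {n : ℕ} (hn : 1 ≤ n) (x : X) :
    bS T g n x ≤ mPhi T g n x := by
  cases n with
  | zero => omega
  | succ m => exact le_max_right _ _

lemma mPhi_measurable {T : X → X} (hT : Measurable T) {g : X → ℝ} (hg : Measurable g) (N : ℕ) :
    Measurable (mPhi T g N) := by
  induction N with
  | zero => simpa [mPhi] using measurable_const
  | succ N ih => exact Measurable.max ih (bS_measurable hT hg (N + 1))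

lemma mPhi_key (T : X → X) (g : X → ℝ) (N : ℕ) (x : X) :
    mPhi T g (N + 1) x ≤ max 0 (g x + mPhi T g N (T x)) := by
  induction N with
  | zero =>
    simp only [mPhi, bS_succ]
    simp [bS, mPhi]
  | succ N ih =>
    show max (mPhi T g (N+1) x) (bS T g (N+2) x) ≤ _
    apply max_le
    · exact le_trans ih (max_le_max le_rfl (add_le_add le_rfl
        (mPhi_mono T g (Nat.le_succ N) (T x))))
    · rw [bS_succ]
      exact le_trans (le_max_right 0 _) (max_le_max le_rfl (add_le_add le_rfl
        (bS_le_mPhi T g (Nat.succ_le_succ (Nat.zero_le N)) (T x))))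

lemma mPhi_bound (T : X → X) (g : X → ℝ) (C : ℝ) (hb : ∀ x, |g x| ≤ C) (N : ℕ) (x : X) :
    mPhi T g N x ≤ N * C := by
  have hC : 0 ≤ C := le_trans (abs_nonneg _) (hb x)
  induction N with
  | zero => simp [mPhi]
  | succ N ih =>
    apply max_le
    · refine le_trans ih ?_
      push_cast
      nlinarith
    · have h1 : |bS T g (N+1) x| ≤ ((N:ℝ)+1) * C := by
        refine le_trans (Finset.abs_sum_le_sum_abs _ _) ?_
        calc ∑ k ∈ Finset.range (N+1), |g (T^[k] x)| ≤ ∑ _k ∈ Finset.range (N+1), C :=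
              Finset.sum_le_sum fun k _ => hb _
          _ = ((N:ℝ)+1) * C := by simp [mul_comm]
      refine le_trans (le_abs_self _) (le_trans h1 ?_)
      push_cast
      exact le_rfl

lemma mPhi_pos_exists (T : X → X) (g : X → ℝ) (N : ℕ) (x : X)
    (h : 0 < mPhi T g N x) : ∃ n, 1 ≤ n ∧ 0 < bS T g n x := by
  induction N with
  | zero => simp [mPhi] at h
  | succ N ih =>
    rcases lt_max_iff.mp h with h' | h'
    · exact ih h'
    · exact ⟨N + 1, Nat.succ_le_succ (Nat.zero_le N), h'⟩


variable {μ : Measure X}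

/-- Garsia's maximal ergodic lemma. -/
lemma garsia [IsProbabilityMeasure μ] {T : X → X} (hT : MeasurePreserving T μ μ)
    {g : X → ℝ} (hg : Measurable g) (C : ℝ) (hb : ∀ x, |g x| ≤ C) :
    0 ≤ ∫ x in {x | ∃ n, 1 ≤ n ∧ 0 < bS T g n x}, g x ∂μ := by
  have hTm : Measurable T := hT.measurable
  -- integrability of bounded measurable functions
  have hint : ∀ (h : X → ℝ) (D : ℝ), Measurable h → (∀ x, |h x| ≤ D) → Integrable h μ := by
    intro h D hm hbd
    exact ⟨hm.aestronglyMeasurable,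
      HasFiniteIntegral.of_bounded (C := D) (ae_of_all _ fun x => by
        simpa [Real.norm_eq_abs] using hbd x)⟩
  have hgint : Integrable g μ := hint g C hg hb
  have hPhiInt : ∀ N, Integrable (mPhi T g N) μ := by
    intro N
    refine hint _ (N * C) (mPhi_measurable hTm hg N) fun x => ?_
    rw [abs_of_nonneg (mPhi_nonneg T g N x)]
    exact mPhi_bound T g C hb N x
  have hPhiTInt : ∀ N, Integrable (fun x => mPhi T g N (T x)) μ := by
    intro N
    refine hint _ (N * C) ((mPhi_measurable hTm hg N).comp hTm) fun x => ?_
    rw [abs_of_nonneg (mPhi_nonneg T g N (T x))]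
    exact mPhi_bound T g C hb N (T x)
  set E : ℕ → Set X := fun N => {x | 0 < mPhi T g (N + 1) x} with hE
  have hEmeas : ∀ N, MeasurableSet (E N) :=
    fun N => measurableSet_lt measurable_const (mPhi_measurable hTm hg (N + 1))
  have hEmono : Monotone E := by
    intro N M h x hx
    exact lt_of_lt_of_le hx (mPhi_mono T g (Nat.succ_le_succ h) x)
  have hEU : (⋃ N, E N) = {x | ∃ n, 1 ≤ n ∧ 0 < bS T g n x} := by
    ext x
    simp only [Set.mem_iUnion, Set.mem_setOf_eq, hE]
    constructor
    · rintro ⟨N, hN⟩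
      exact mPhi_pos_exists T g (N + 1) x hN
    · rintro ⟨n, hn1, hn⟩
      refine ⟨n - 1, ?_⟩
      have h1 : n - 1 + 1 = n := Nat.succ_pred_eq_of_pos hn1
      rw [h1]
      exact lt_of_lt_of_le hn (bS_le_mPhi T g hn1 x)
  -- key step: 0 ≤ ∫_{E N} g for each N
  have hstep : ∀ N, 0 ≤ ∫ x in E N, g x ∂μ := by
    intro N
    set h : X → ℝ := fun x => mPhi T g (N + 1) x - mPhi T g N (T x) with hh
    have hhint : Integrable h μ := (hPhiInt (N + 1)).sub (hPhiTInt N)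
    have h0 : 0 ≤ ∫ x, h x ∂μ := by
      rw [hh, integral_sub (hPhiInt (N + 1)) (hPhiTInt N)]
      have heq : ∫ x, mPhi T g N (T x) ∂μ = ∫ x, mPhi T g N x ∂μ := by
        rw [← integral_map hTm.aemeasurable
          (by rw [hT.map_eq]; exact (mPhi_measurable hTm hg N).aestronglyMeasurable), hT.map_eq]
      rw [heq]
      have := integral_mono (hPhiInt N) (hPhiInt (N + 1))
        (fun x => mPhi_mono T g (Nat.le_succ N) x)
      linarith
    have hsplit := integral_add_compl (hEmeas N) hhint
    have hcompl : ∫ x in (E N)ᶜ, h x ∂μ ≤ 0 := by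
      refine setIntegral_nonpos (hEmeas N).compl fun x hx => ?_
      have hx' : mPhi T g (N + 1) x ≤ 0 := not_lt.mp hx
      have := mPhi_nonneg T g N (T x)
      simp only [hh]
      linarith
    have h1 : 0 ≤ ∫ x in E N, h x ∂μ := by linarith
    refine le_trans h1 (setIntegral_mono_on hhint.integrableOn hgint.integrableOn
      (hEmeas N) fun x hx => ?_)
    have hkey := mPhi_key T g N x
    have hpos : (0:ℝ) < mPhi T g (N + 1) x := hx
    rcases le_max_iff.mp hkey with h' | h'
    · linarith
    · simp only [hh]; linarith
  have htend := tendsto_setIntegral_of_monotone hEmeas hEmono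
    (f := g) (by rw [hEU]; exact hgint.integrableOn)
  rw [hEU] at htend
  exact ge_of_tendsto' htend hstep

/-- A.e. point of `D` has positive lower density of visit times to `D`. -/
lemma density [IsProbabilityMeasure μ] {T : X → X} (hT : MeasurePreserving T μ μ)
    {D : Set X} (hD : MeasurableSet D) :
    ∀ᵐ x ∂μ, x ∈ D → ∃ j : ℕ, 1 ≤ j ∧ ∃ m : ℕ, ∀ n, m ≤ n →
      (n : ℝ) / j ≤ ∑ k ∈ Finset.range n, D.indicator (fun _ => (1:ℝ)) (T^[k] x) := by
  have hTm : Measurable T := hT.measurable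
  set ind : X → ℝ := D.indicator (fun _ => (1:ℝ)) with hindd
  have hind : Measurable ind := measurable_const.indicator hD
  have hind0 : ∀ y, 0 ≤ ind y := fun y => Set.indicator_nonneg (fun _ _ => zero_le_one) y
  have hind1 : ∀ y, ind y ≤ 1 := fun y => Set.indicator_le_self' (fun _ _ => zero_le_one) y
  -- the bad set
  set Bad : Set X := {x | x ∈ D ∧ ¬ ∃ j : ℕ, 1 ≤ j ∧ ∃ m : ℕ, ∀ n, m ≤ n →
      (n : ℝ) / j ≤ ∑ k ∈ Finset.range n, ind (T^[k] x)} with hBad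
  -- the auxiliary forward-invariant sets
  have key : ∀ j : ℕ, 1 ≤ j → μ Bad ≤ ENNReal.ofReal (1 / j) := by
    intro j hj
    have hjR : (0:ℝ) < j := by exact_mod_cast hj
    set Z : Set X := {x | ∀ m : ℕ, ∃ n : ℕ, 1 ≤ n ∧
        (∑ k ∈ Finset.range n, ind (T^[m + k] x)) < n / j} with hZ
    have hZmeas : MeasurableSet Z := by
      have : Z = ⋂ m : ℕ, ⋃ n : ℕ, ({x | 1 ≤ n} ∩
          {x | (∑ k ∈ Finset.range n, ind (T^[m + k] x)) < (n:ℝ) / j}) := by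
        ext x; simp [hZ, Set.mem_iInter, Set.mem_iUnion]
      rw [this]
      refine MeasurableSet.iInter fun m => MeasurableSet.iUnion fun n =>
        (MeasurableSet.const _).inter (measurableSet_lt ?_ measurable_const)
      exact Finset.measurable_sum _ fun k _ => hind.comp (hTm.iterate (m + k))
    have hZinv : ∀ x ∈ Z, T x ∈ Z := by
      intro x hx m
      obtain ⟨n, hn, hlt⟩ := hx (m + 1)
      refine ⟨n, hn, ?_⟩
      have : ∀ k, T^[m + k] (T x) = T^[m + 1 + k] x := by
        intro k
        rw [show m + 1 + k = m + k + 1 by ring, Function.iterate_succ_apply]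
      calc (∑ k ∈ Finset.range n, ind (T^[m + k] (T x)))
          = ∑ k ∈ Finset.range n, ind (T^[m + 1 + k] x) :=
            Finset.sum_congr rfl fun k _ => by rw [this k]
        _ < (n:ℝ) / j := hlt
    have hZiter : ∀ (k : ℕ) (x : X), x ∈ Z → T^[k] x ∈ Z := by
      intro k
      induction k with
      | zero => intro x hx; simpa using hx
      | succ k ih =>
        intro x hx
        rw [Function.iterate_succ_apply']
        exact hZinv _ (ih x hx)
    set g : X → ℝ := Z.indicator (fun y => 1 / (j:ℝ) - ind y) with hg
    have hgmeas : Measurable g := (measurable_const.sub hind).indicator hZmeas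
    have hgbd : ∀ x, |g x| ≤ 2 := by
      intro x
      rw [hg]
      by_cases hx : x ∈ Z
      · rw [Set.indicator_of_mem hx]
        have h1j : 1 / (j:ℝ) ≤ 1 := by
          rw [div_le_one hjR]; exact_mod_cast hj
        have := hind0 x; have := hind1 x
        rw [abs_le]; constructor <;> nlinarith [one_div_pos.mpr hjR]
      · rw [Set.indicator_of_notMem hx]; norm_num
    -- `Z` is contained in the maximal set of `g`
    have hZE : Z ⊆ {x | ∃ n, 1 ≤ n ∧ 0 < bS T g n x} := by
      intro x hx
      obtain ⟨n, hn, hlt⟩ := hx 0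
      refine ⟨n, hn, ?_⟩
      have hbs : bS T g n x = (n:ℝ) / j - ∑ k ∈ Finset.range n, ind (T^[k] x) := by
        unfold bS
        have : ∀ k, g (T^[k] x) = 1 / (j:ℝ) - ind (T^[k] x) := by
          intro k
          rw [hg, Set.indicator_of_mem (hZiter k x hx)]
        rw [Finset.sum_congr rfl fun k _ => this k, Finset.sum_sub_distrib]
        simp [div_eq_mul_inv, mul_comm]
      rw [hbs]
      have : (∑ k ∈ Finset.range n, ind (T^[0 + k] x)) = ∑ k ∈ Finset.range n, ind (T^[k] x) := by
        simp
      rw [this] at hlt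
      linarith
    have hgar := garsia hT hgmeas 2 hgbd
    -- compute the integral
    have hindint : Integrable ind μ := ⟨hind.aestronglyMeasurable,
      HasFiniteIntegral.of_bounded (C := 1) (ae_of_all _ fun x => by
        rw [Real.norm_eq_abs, abs_of_nonneg (hind0 x)]; exact hind1 x)⟩
    have hEeq : ∫ x in {x | ∃ n, 1 ≤ n ∧ 0 < bS T g n x}, g x ∂μ
        = ∫ x in Z, (1 / (j:ℝ) - ind x) ∂μ := by
      rw [hg, setIntegral_indicator hZmeas, Set.inter_eq_right.mpr hZE]
    have hsub : ∫ x in Z, (1 / (j:ℝ) - ind x) ∂μ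
        = (μ Z).toReal * (1 / j) - (μ (Z ∩ D)).toReal := by
      rw [integral_sub ((integrableOn_const_iff (C := 1 / (j:ℝ))).mpr (Or.inr (measure_lt_top μ Z)))
        hindint.integrableOn]
      congr 1
      · rw [setIntegral_const]; simp [mul_comm, Measure.real]
      · rw [hindd, setIntegral_indicator hD, setIntegral_const]; simp [Measure.real]
    have hle : (μ (Z ∩ D)).toReal ≤ 1 / j := by
      rw [hEeq, hsub] at hgar
      have hμZ : (μ Z).toReal ≤ 1 := by
        simpa using ENNReal.toReal_mono ENNReal.one_ne_top (prob_le_one (μ := μ) (s := Z))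
      nlinarith [one_div_pos.mpr hjR]
    -- Bad ⊆ Z ∩ D
    have hBadSub : Bad ⊆ Z ∩ D := by
      intro x hx
      obtain ⟨hxD, hnot⟩ := hx
      push_neg at hnot
      refine ⟨?_, hxD⟩
      intro m
      obtain ⟨n', hn', hlt⟩ := hnot (2 * j) (by omega) (2 * (m + 1))
      set n : ℕ := n' - m with hn
      have hmn' : m ≤ n' := by omega
      have hnm : n + m = n' := by omega
      have hmltn : m < n := by omega
      have h1n : 1 ≤ n := by omega
      refine ⟨n, h1n, ?_⟩
      have hw : (∑ k ∈ Finset.range n, ind (T^[m + k] x))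
          = ∑ t ∈ Finset.Ico m n', ind (T^[t] x) := by
        rw [Finset.sum_Ico_eq_sum_range]
      have hsub2 : (∑ t ∈ Finset.Ico m n', ind (T^[t] x))
          ≤ ∑ t ∈ Finset.range n', ind (T^[t] x) := by
        rw [Finset.range_eq_Ico]
        exact Finset.sum_le_sum_of_subset_of_nonneg
          (Finset.Ico_subset_Ico (Nat.zero_le m) le_rfl) (fun t _ _ => hind0 _)
      have hcast : (n' : ℝ) = (n : ℝ) + m := by
        rw [← hnm]; push_cast; ring
      have h2j : (0:ℝ) < 2 * j := by positivity
      calc (∑ k ∈ Finset.range n, ind (T^[m + k] x))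
          ≤ ∑ t ∈ Finset.range n', ind (T^[t] x) := by rw [hw]; exact hsub2
        _ < (n' : ℝ) / (2 * j) := by exact_mod_cast hlt
        _ < (n : ℝ) / j := by
            rw [hcast, div_lt_div_iff₀ h2j hjR]
            have : (m:ℝ) < n := by exact_mod_cast hmltn
            nlinarith
    calc μ Bad ≤ μ (Z ∩ D) := measure_mono hBadSub
      _ = ENNReal.ofReal ((μ (Z ∩ D)).toReal) := (ENNReal.ofReal_toReal
            (measure_ne_top μ _)).symm
      _ ≤ ENNReal.ofReal (1 / j) := ENNReal.ofReal_le_ofReal hle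
  -- conclude
  have hBad0 : μ Bad = 0 := by
    refine le_antisymm ?_ zero_le
    have htend : Tendsto (fun j : ℕ => ENNReal.ofReal (1 / j)) atTop (𝓝 0) := by
      rw [show (0:ENNReal) = ENNReal.ofReal 0 by simp]
      exact ENNReal.tendsto_ofReal tendsto_one_div_atTop_nhds_zero_nat
    exact ge_of_tendsto htend (eventually_atTop.mpr ⟨1, fun j hj => key j hj⟩)
  rw [ae_iff]
  convert hBad0 using 2
  ext x
  simp only [hBad, Set.mem_setOf_eq, Classical.not_imp]

/-- Core step: a.e. point where `f n x ≤ c < 0` for all `n ≥ N` satisfies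
`limsup (1/n) f n < 0`. -/
lemma core [IsProbabilityMeasure μ] {T : X → X} (hT : MeasurePreserving T μ μ)
    {f : ℕ → X → EReal} (hmeas : ∀ n, Measurable (f n)) (hne : ∀ n x, f n x ≠ ⊤)
    (hsub : ∀ᵐ x ∂μ, ∀ n m, 1 ≤ n → 1 ≤ m → f (n + m) x ≤ f n (T^[m] x) + f m x)
    {c : ℝ} (hc : c < 0) {N : ℕ} (hN : 1 ≤ N) :
    ∀ᵐ x ∂μ, (∀ n, N ≤ n → f n x ≤ (c : EReal)) →
      limsup (fun n : ℕ => (((n : ℝ)⁻¹ : ℝ) : EReal) * f n x) atTop < 0 := by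
  classical
  set D : Set X := {x | ∀ n, N ≤ n → f n x ≤ (c : EReal)} with hDdef
  have hDmeas : MeasurableSet D := by
    have : D = ⋂ n : ℕ, ⋂ _h : N ≤ n, {x | f n x ≤ (c : EReal)} := by
      ext x; simp [hDdef, Set.mem_iInter]
    rw [this]
    exact MeasurableSet.iInter fun n => MeasurableSet.iInter fun _ =>
      measurableSet_le (hmeas n) measurable_const
  filter_upwards [density hT hDmeas, hsub] with x hdens hsubx
  intro hxD
  have hxD' : x ∈ D := hxD
  obtain ⟨j, hj, m0, hm0⟩ := hdens hxD'
  have hjR : (0:ℝ) < j := by exact_mod_cast hj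
  have hNR : (0:ℝ) < N := by exact_mod_cast hN
  set ind : X → ℝ := D.indicator (fun _ => (1:ℝ)) with hind
  set cnt : ℕ → ℝ := fun n => ∑ k ∈ Finset.range n, ind (T^[k] x) with hcnt
  have hind0 : ∀ y, 0 ≤ ind y := fun y => Set.indicator_nonneg (fun _ _ => zero_le_one) y
  have hind1 : ∀ y, ind y ≤ 1 := fun y => Set.indicator_le_self' (fun _ _ => zero_le_one) y
  have hcnt_mono : ∀ a b, a ≤ b → cnt a ≤ cnt b := by
    intro a b hab
    exact Finset.sum_le_sum_of_subset_of_nonneg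
      (Finset.range_subset_range.mpr hab) (fun t _ _ => hind0 _)
  -- visits to D are unbounded
  have huge : ∀ M : ℕ, ∃ v, M ≤ v ∧ T^[v] x ∈ D := by
    intro M
    by_contra hcon
    push_neg at hcon
    set n : ℕ := max m0 (j * (M + 1)) with hn
    have h1 : (n:ℝ)/j ≤ cnt n := hm0 n (le_max_left _ _)
    have h2 : cnt n ≤ M := by
      calc cnt n ≤ ∑ k ∈ Finset.range n, (if k < M then (1:ℝ) else 0) := by
            refine Finset.sum_le_sum fun k _ => ?_
            by_cases hk : k < M
            · rw [if_pos hk]; exact hind1 _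
            · have h0 : ind (T^[k] x) = 0 := by
                rw [hind]
                exact Set.indicator_of_notMem (hcon k (not_lt.mp hk)) _
              simp [if_neg hk, h0]
        _ = (((Finset.range n).filter (fun k => k < M)).card : ℝ) := by
              rw [Finset.sum_boole]
        _ ≤ M := by
              have : ((Finset.range n).filter (fun k => k < M)) ⊆ Finset.range M := by
                intro t ht
                simp only [Finset.mem_filter] at ht
                exact Finset.mem_range.mpr ht.2
              have := Finset.card_le_card this
              simp only [Finset.card_range] at this
              exact_mod_cast this
    have h3 : ((M:ℝ) + 1) ≤ (n:ℝ)/j := by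
      rw [le_div_iff₀ hjR]
      have : j * (M + 1) ≤ n := le_max_right _ _
      have := (Nat.cast_le (α := ℝ)).mpr this
      push_cast at this ⊢
      linarith
    linarith
  -- the selected return times
  set k : ℕ → ℕ := fun i => Nat.rec 0 (fun _ ki => Nat.find (huge (ki + N))) i with hk
  have hk0 : k 0 = 0 := rfl
  have hkmemS : ∀ i, T^[k (i+1)] x ∈ D := fun i => (Nat.find_spec (huge (k i + N))).2
  have hkge : ∀ i, k i + N ≤ k (i+1) := fun i => (Nat.find_spec (huge (k i + N))).1
  have hkmin : ∀ i v, k i + N ≤ v → T^[v] x ∈ D → k (i+1) ≤ v :=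
    fun i v h1 h2 => Nat.find_min' _ ⟨h1, h2⟩
  have hki : ∀ i, i ≤ k i := by
    intro i
    induction i with
    | zero => simp
    | succ i ih => have := hkge i; omega
  -- Claim A
  have claimA : ∀ i, ∀ n, k i + N ≤ n → f n x ≤ (((i:ℝ) + 1) * c : ℝ) := by
    intro i
    induction i with
    | zero =>
      intro n hn
      have h := hxD' n (by rw [hk0] at hn; omega)
      calc f n x ≤ (c : EReal) := h
        _ = ((((0:ℕ):ℝ) + 1) * c : ℝ) := by norm_num
    | succ i ih =>
      intro n hn
      set K := k (i+1) with hK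
      have hK1 : 1 ≤ K := by have := hkge i; omega
      have h1K : 1 ≤ n - K := by have := hkge (i+1); omega
      have heq : (n - K) + K = n := by have := hkge (i+1); omega
      have hmain := hsubx (n - K) K h1K hK1
      rw [heq] at hmain
      have hA : f (n - K) (T^[K] x) ≤ (c : EReal) := hkmemS i (n - K) (by omega)
      have hB : f K x ≤ (((i:ℝ) + 1) * c : ℝ) := ih K (hkge i)
      have hcoe : ((((i+1:ℕ):ℝ) + 1) * c) = c + ((i:ℝ) + 1) * c := by
        push_cast
        ring
      calc f n x ≤ f (n - K) (T^[K] x) + f K x := hmain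
        _ ≤ (c : EReal) + (((i:ℝ) + 1) * c : ℝ) := add_le_add hA hB
        _ = ((((i+1:ℕ):ℝ) + 1) * c : ℝ) := by rw [hcoe, EReal.coe_add]
  -- Claim B
  have claimB : ∀ i, cnt (k i) ≤ (i:ℝ) * N := by
    intro i
    induction i with
    | zero => simp [hk0, hcnt]
    | succ i ih =>
      have hsplit : cnt (k (i+1)) = cnt (k i) + ∑ t ∈ Finset.Ico (k i) (k (i+1)), ind (T^[t] x) := by
        simp only [hcnt]
        rw [Finset.range_eq_Ico]
        rw [← Finset.sum_Ico_consecutive _ (Nat.zero_le (k i))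
          (show k i ≤ k (i+1) by have := hkge i; omega)]
        rw [Finset.range_eq_Ico]
      have hbound : (∑ t ∈ Finset.Ico (k i) (k (i+1)), ind (T^[t] x)) ≤ N := by
        calc (∑ t ∈ Finset.Ico (k i) (k (i+1)), ind (T^[t] x))
            ≤ ∑ t ∈ Finset.Ico (k i) (k (i+1)), (if t < k i + N then (1:ℝ) else 0) := by
              refine Finset.sum_le_sum fun t ht => ?_
              by_cases h' : t < k i + N
              · rw [if_pos h']; exact hind1 _
              · have hle : k i + N ≤ t := not_lt.mp h'
                have htlt : t < k (i+1) := (Finset.mem_Ico.mp ht).2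
                have hnm : T^[t] x ∉ D := fun hmem => absurd (hkmin i t hle hmem) (by omega)
                have h0 : ind (T^[t] x) = 0 := by
                  rw [hind]
                  exact Set.indicator_of_notMem hnm _
                simp [if_neg h', h0]
          _ = (((Finset.Ico (k i) (k (i+1))).filter (fun t => t < k i + N)).card : ℝ) := by
              rw [Finset.sum_boole]
          _ ≤ N := by
              have hsub3 : ((Finset.Ico (k i) (k (i+1))).filter (fun t => t < k i + N))
                  ⊆ Finset.Ico (k i) (k i + N) := by
                intro t ht
                simp only [Finset.mem_filter, Finset.mem_Ico] at ht ⊢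
                exact ⟨ht.1.1, ht.2⟩
              have := Finset.card_le_card hsub3
              rw [Nat.card_Ico] at this
              have : ((Finset.Ico (k i) (k (i+1))).filter (fun t => t < k i + N)).card ≤ N := by
                omega
              exact_mod_cast this
      push_cast
      linarith
  -- final eventual bound
  have hfinal : ∀ n, max (2*N) (m0 + N) ≤ n →
      (((n : ℝ)⁻¹ : ℝ) : EReal) * f n x ≤ ((c / (2 * (j:ℝ) * N)) : ℝ) := by
    intro n hn
    have h2N : 2*N ≤ n := le_trans (le_max_left _ _) hn
    have hm0N : m0 + N ≤ n := le_trans (le_max_right _ _) hn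
    have hNn : N ≤ n := by omega
    have hn1 : 1 ≤ n := by omega
    have hnR : (0:ℝ) < n := by exact_mod_cast hn1
    set I : ℕ := Nat.findGreatest (fun i => k i ≤ n - N) n with hI
    have hPI : k I ≤ n - N := Nat.findGreatest_spec (P := fun i => k i ≤ n - N)
      (Nat.zero_le n) (show k 0 ≤ n - N by rw [hk0]; omega)
    have hIn : I + 1 ≤ n := by have := hki I; omega
    have hlt : Nat.findGreatest (fun i => k i ≤ n - N) n < I + 1 := by
      rw [← hI]
      omega
    have hnot' := Nat.findGreatest_is_greatest (P := fun i => k i ≤ n - N) hlt hIn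
    have hnot : ¬ (k (I+1) ≤ n - N) := hnot'
    have hkI1 : n - N + 1 ≤ k (I+1) := by omega
    have hfn : f n x ≤ (((I:ℝ) + 1) * c : ℝ) := claimA I n (by omega)
    have hcnt1 : ((n - N + 1 : ℕ):ℝ)/j ≤ cnt (n - N + 1) := hm0 _ (by omega)
    have hcnt2 : cnt (n - N + 1) ≤ cnt (k (I+1)) := hcnt_mono _ _ hkI1
    have hcnt3 : cnt (k (I+1)) ≤ ((I:ℝ) + 1) * N := by
      have := claimB (I+1)
      push_cast at this
      linarith
    have hcast : ((n - N + 1 : ℕ):ℝ) = (n:ℝ) - N + 1 := by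
      push_cast [Nat.cast_sub hNn]
      ring
    have hA2 : ((n:ℝ) - N + 1) ≤ ((I:ℝ) + 1) * N * j := by
      rw [hcast] at hcnt1
      rw [div_le_iff₀ hjR] at hcnt1
      have hmul := mul_le_mul_of_nonneg_right (le_trans hcnt2 hcnt3) (le_of_lt hjR)
      linarith
    have hB2 : (n:ℝ) ≤ 2 * ((n:ℝ) - N + 1) := by
      have : (2*N : ℝ) ≤ n := by exact_mod_cast h2N
      linarith
    have hI1 : (n:ℝ) / (2 * j * N) ≤ (I:ℝ) + 1 := by
      rw [div_le_iff₀ (by positivity)]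
      nlinarith
    have hfn2 : f n x ≤ (((n:ℝ)/(2*(j:ℝ)*N) * c : ℝ) : EReal) := by
      refine le_trans hfn (EReal.coe_le_coe_iff.mpr ?_)
      exact mul_le_mul_of_nonpos_right hI1 (le_of_lt hc)
    by_cases hb : f n x = ⊥
    · rw [hb, EReal.mul_bot_of_pos]
      · exact bot_le
      · exact EReal.coe_pos.mpr (by positivity)
    · have hr := EReal.coe_toReal (hne n x) hb
      rw [← hr] at hfn2 ⊢
      rw [← EReal.coe_mul]
      refine EReal.coe_le_coe_iff.mpr ?_
      have ha : (f n x).toReal ≤ (n:ℝ)/(2*(j:ℝ)*N) * c := EReal.coe_le_coe_iff.mp hfn2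
      have hkey : (n:ℝ)⁻¹ * ((n:ℝ)/(2*(j:ℝ)*N) * c) = c / (2*(j:ℝ)*N) := by
        field_simp
      calc (n:ℝ)⁻¹ * (f n x).toReal ≤ (n:ℝ)⁻¹ * ((n:ℝ)/(2*(j:ℝ)*N) * c) :=
            mul_le_mul_of_nonneg_left ha (by positivity)
        _ = c / (2*(j:ℝ)*N) := hkey
  have hlim : limsup (fun n : ℕ => (((n : ℝ)⁻¹ : ℝ) : EReal) * f n x) atTop
      ≤ ((c / (2 * (j:ℝ) * N)) : ℝ) :=
    limsup_le_of_le (h := eventually_atTop.mpr ⟨max (2*N) (m0 + N), hfinal⟩)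
  refine lt_of_le_of_lt hlim ?_
  rw [← EReal.coe_zero]
  exact EReal.coe_lt_coe_iff.mpr (div_neg_of_neg_of_pos hc (by positivity))
end SubadditiveAux

/-- For a measure-preserving (not necessarily ergodic) transformation and a subadditive
sequence of measurable functions with values in `ℝ ∪ {-∞}` whose first positive part is
integrable, the set where `limsup f n < 0` agrees, up to a `μ`-null set, with the set
where the a.e. limit `lim (1/n) f n < 0` (expressed as a limsup in `EReal`). -/
theorem subadditive_symmDiff_null {X : Type*} [MeasurableSpace X] {μ : Measure X}
    [IsProbabilityMeasure μ] (T : X → X) (hT : MeasurePreserving T μ μ)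
    (f : ℕ → X → EReal) (hmeas : ∀ n, Measurable (f n))
    (hne : ∀ n x, f n x ≠ ⊤)
    (hpos : Integrable (fun x => ((f 1 x) ⊔ 0).toReal) μ)
    (hsub : ∀ n m, 1 ≤ n → 1 ≤ m →
      ∀ᵐ x ∂μ, f (n + m) x ≤ f n (T^[m] x) + f m x) :
    μ (symmDiff {x | limsup (fun n => f n x) atTop < 0}
        {x | limsup (fun n : ℕ => (((n : ℝ)⁻¹ : ℝ) : EReal) * f n x) atTop < 0}) = 0 := by
  classical
  set A : Set X := {x | limsup (fun n => f n x) atTop < 0} with hA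
  set B : Set X := {x | limsup (fun n : ℕ => (((n : ℝ)⁻¹ : ℝ) : EReal) * f n x) atTop < 0}
    with hB
  -- `B ⊆ A`
  have hBA : B ⊆ A := by
    intro x hx
    obtain ⟨r, hr1, hr2⟩ := EReal.exists_between_coe_real hx
    have hrneg : r < 0 := EReal.coe_neg'.mp hr2
    have hev := eventually_lt_of_limsup_lt hr1
    have hev2 : ∀ᶠ n : ℕ in atTop, f n x ≤ (r : EReal) := by
      filter_upwards [hev, eventually_ge_atTop 1] with n hn hn1
      by_cases hb : f n x = ⊥
      · rw [hb]; exact bot_le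
      · have hcoe := EReal.coe_toReal (hne n x) hb
        rw [← hcoe] at hn ⊢
        rw [← EReal.coe_mul] at hn
        have h1 := EReal.coe_lt_coe_iff.mp hn
        refine EReal.coe_le_coe_iff.mpr ?_
        have hnR : (1:ℝ) ≤ n := by exact_mod_cast hn1
        have hnpos : (0:ℝ) < n := by linarith
        have h2 : (f n x).toReal < (n:ℝ) * r := by
          have heq : (f n x).toReal = (n:ℝ) * ((n:ℝ)⁻¹ * (f n x).toReal) := by
            field_simp
          rw [heq]
          exact mul_lt_mul_of_pos_left h1 hnpos
        nlinarith
    exact lt_of_le_of_lt (limsup_le_of_le (h := hev2)) hr2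
  -- the countable cover of `A \ B`
  set S : ℚ × ℕ → Set X := fun p =>
    if (p.1 < 0 ∧ 1 ≤ p.2) then
      ({x | ∀ n, p.2 ≤ n → f n x ≤ (((p.1 : ℝ) : EReal))} \ B) else ∅ with hS
  have hcover : A \ B ⊆ ⋃ p : ℚ × ℕ, S p := by
    rintro x ⟨hxA, hxB⟩
    obtain ⟨r, hr1, hr2⟩ := EReal.exists_between_coe_real hxA
    have hrneg : r < 0 := EReal.coe_neg'.mp hr2
    obtain ⟨q, hq1, hq2⟩ := exists_rat_btwn hrneg
    obtain ⟨N, hN⟩ := eventually_atTop.mp (eventually_lt_of_limsup_lt hr1)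
    refine Set.mem_iUnion.mpr ⟨(q, max N 1), ?_⟩
    rw [hS]
    simp only
    rw [if_pos ⟨by exact_mod_cast hq2, le_max_right N 1⟩]
    refine ⟨fun n hn => ?_, hxB⟩
    refine le_trans (le_of_lt (hN n (le_trans (le_max_left N 1) hn))) ?_
    exact EReal.coe_le_coe_iff.mpr (le_of_lt hq1)
  -- a.e. subadditivity at every pair
  have hsubae : ∀ᵐ x ∂μ, ∀ n m, 1 ≤ n → 1 ≤ m → f (n + m) x ≤ f n (T^[m] x) + f m x := by
    rw [ae_all_iff]
    intro n
    rw [ae_all_iff]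
    intro m
    by_cases h1 : 1 ≤ n
    · by_cases h2 : 1 ≤ m
      · filter_upwards [hsub n m h1 h2] with x hx _ _
        exact hx
      · filter_upwards with x h1' h2'
        exact absurd h2' h2
    · filter_upwards with x h1'
      exact absurd h1' h1
  -- each piece is null
  have hnull : ∀ p : ℚ × ℕ, μ (S p) = 0 := by
    rintro ⟨q, N⟩
    rw [hS]
    simp only
    by_cases hp : (q : ℚ) < 0 ∧ 1 ≤ N
    · rw [if_pos hp]
      have hqneg : ((q:ℝ)) < 0 := by exact_mod_cast hp.1
      have hcore := SubadditiveAux.core hT hmeas hne hsubae hqneg hp.2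
      rw [ae_iff] at hcore
      refine measure_mono_null ?_ hcore
      intro x hx
      simp only [Set.mem_setOf_eq, Classical.not_imp]
      exact ⟨hx.1, hx.2⟩
    · rw [if_neg hp]
      simp
  rw [Set.symmDiff_def]
  refine measure_union_null ?_ ?_
  · exact measure_mono_null hcover (measure_iUnion_null hnull)
  · rw [Set.diff_eq_empty.mpr hBA]
    simp
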